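/- Let γ > 1 and fix v̄ in a compact subinterval of (0,∞) (e.g. v̄ ∈ [v*/2, 2v*] for some v* > 0). Then there exists C > 0 such that p(v|v̄) ≤ C Q(v|v̄) for all v > 2v*, where p(v) = v^{−γ}, Q(v) = v^{1−γ}/(γ−1), and the relative functionals are defined as F(v|v̄) = F(v) − F(v̄) − F'(v̄)(v − v̄). -/

import Mathlib

lemma rel_aux (γ : ℝ) (hγ : 1 < γ) (vb C : ℝ) (hvb : 0 < vb) (hC : γ + 1 ≤ C * vb)
    (v : ℝ) (hv : vb ≤ v) :
    v ^ (-γ) - vb ^ (-γ) + γ * vb ^ (-γ - 1) * (v - vb) ≤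
      C * (v ^ (1 - γ) / (γ - 1) - vb ^ (1 - γ) / (γ - 1) + vb ^ (-γ) * (v - vb)) := by
  have hC0 : 0 < C := by nlinarith
  set f : ℝ → ℝ := fun x => C * (x ^ (1 - γ) / (γ - 1) - vb ^ (1 - γ) / (γ - 1)
      + vb ^ (-γ) * (x - vb)) - (x ^ (-γ) - vb ^ (-γ) + γ * vb ^ (-γ - 1) * (x - vb)) with hf
  set g : ℝ → ℝ := fun x => C * (vb ^ (-γ) - x ^ (-γ))
      - γ * (vb ^ (-γ - 1) - x ^ (-γ - 1)) with hg
  have hdf : ∀ x : ℝ, 0 < x → HasDerivAt f (g x) x := by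
    intro x hx
    have h1 : HasDerivAt (fun y : ℝ => y ^ (1 - γ)) ((1 - γ) * x ^ (-γ)) x := by
      have := Real.hasDerivAt_rpow_const (x := x) (p := 1 - γ) (Or.inl hx.ne')
      simpa [show (1 - γ - 1) = -γ by ring] using this
    have h2 : HasDerivAt (fun y : ℝ => y ^ (-γ)) ((-γ) * x ^ (-γ - 1)) x :=
      Real.hasDerivAt_rpow_const (x := x) (p := -γ) (Or.inl hx.ne')
    have hlin : HasDerivAt (fun y : ℝ => y - vb) 1 x := (hasDerivAt_id x).sub_const vb
    have hA : HasDerivAt (fun y : ℝ => y ^ (1 - γ) / (γ - 1) - vb ^ (1 - γ) / (γ - 1)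
        + vb ^ (-γ) * (y - vb)) ((1 - γ) * x ^ (-γ) / (γ - 1) + vb ^ (-γ) * 1) x :=
      ((h1.div_const _).sub_const _).add (hlin.const_mul _)
    have hB : HasDerivAt (fun y : ℝ => y ^ (-γ) - vb ^ (-γ) + γ * vb ^ (-γ - 1) * (y - vb))
        ((-γ) * x ^ (-γ - 1) + γ * vb ^ (-γ - 1) * 1) x :=
      (h2.sub_const _).add (hlin.const_mul _)
    have := (hA.const_mul C).sub hB
    refine this.congr_deriv ?_
    have hγ1 : γ - 1 ≠ 0 := by linarith
    field_simp [hg]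
    ring
  have hdg : ∀ x : ℝ, 0 < x → HasDerivAt g (γ * x ^ (-γ - 2) * (C * x - (γ + 1))) x := by
    intro x hx
    have h2 : HasDerivAt (fun y : ℝ => y ^ (-γ)) ((-γ) * x ^ (-γ - 1)) x :=
      Real.hasDerivAt_rpow_const (x := x) (p := -γ) (Or.inl hx.ne')
    have h3 : HasDerivAt (fun y : ℝ => y ^ (-γ - 1)) ((-γ - 1) * x ^ (-γ - 2)) x := by
      have := Real.hasDerivAt_rpow_const (x := x) (p := -γ - 1) (Or.inl hx.ne')
      simpa [show (-γ - 1 - 1) = -γ - 2 by ring] using this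
    have := (((hasDerivAt_const x (vb ^ (-γ))).sub h2).const_mul C).sub
      (((hasDerivAt_const x (vb ^ (-γ - 1))).sub h3).const_mul γ)
    refine this.congr_deriv ?_
    have hpow : x ^ (-γ - 1) = x ^ (-γ - 2) * x := by
      rw [← Real.rpow_add_one hx.ne']; ring_nf
    rw [hpow]; ring
  have hgmono : MonotoneOn g (Set.Ici vb) := by
    apply monotoneOn_of_deriv_nonneg (convex_Ici vb)
    · exact fun x hx => (hdg x (hvb.trans_le hx)).continuousAt.continuousWithinAt
    · intro x hx
      rw [interior_Ici] at hx
      exact ((hdg x (hvb.trans hx)).differentiableAt).differentiableWithinAt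
    · intro x hx
      rw [interior_Ici] at hx
      have hx0 : 0 < x := hvb.trans hx
      rw [(hdg x hx0).deriv]
      have h1 : (0:ℝ) ≤ γ * x ^ (-γ - 2) := by positivity
      have hxb : vb < x := hx
      have h2 : γ + 1 ≤ C * x := by nlinarith [mul_lt_mul_of_pos_left hxb hC0]
      exact mul_nonneg h1 (by linarith)
  have hgvb : g vb = 0 := by simp [hg]
  have hgnn : ∀ x ∈ Set.Ici vb, 0 ≤ g x := fun x hx =>
    hgvb ▸ hgmono (Set.self_mem_Ici) hx hx
  have hfmono : MonotoneOn f (Set.Ici vb) := by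
    apply monotoneOn_of_deriv_nonneg (convex_Ici vb)
    · exact fun x hx => (hdf x (hvb.trans_le hx)).continuousAt.continuousWithinAt
    · intro x hx
      rw [interior_Ici] at hx
      exact ((hdf x (hvb.trans hx)).differentiableAt).differentiableWithinAt
    · intro x hx
      rw [interior_Ici] at hx
      rw [(hdf x (hvb.trans hx)).deriv]
      exact hgnn x (le_of_lt (show vb < x from hx))
  have hfvb : f vb = 0 := by simp [hf]
  have := hfmono Set.self_mem_Ici (show v ∈ Set.Ici vb from hv) hv
  rw [hfvb] at this
  simp only [hf] at this
  linarith

theorem relative_pressure_le_relative_Q (γ : ℝ) (hγ : 1 < γ) (vs : ℝ)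
    (hvs : 0 < vs) :
    ∃ C > 0, ∀ vb : ℝ, vs / 2 ≤ vb → vb ≤ 2 * vs → ∀ v : ℝ, 2 * vs < v →
      v ^ (-γ) - vb ^ (-γ) + γ * vb ^ (-γ - 1) * (v - vb) ≤
        C * (v ^ (1 - γ) / (γ - 1) - vb ^ (1 - γ) / (γ - 1) +
          vb ^ (-γ) * (v - vb)) := by
  refine ⟨2 * (γ + 1) / vs, by positivity, fun vb h1 h2 v hv => ?_⟩
  have hvb : 0 < vb := lt_of_lt_of_le (by linarith) h1
  have hC : γ + 1 ≤ 2 * (γ + 1) / vs * vb := by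
    rw [div_mul_eq_mul_div, le_div_iff₀ hvs]
    nlinarith
  exact rel_aux γ hγ vb _ hvb hC v (by linarith)
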